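/- Let p ≥ 1 be an integer and let e_p be a primitive p-th root of unity in ℂ. Then for every nonzero complex number x, σ_p(x,e_p) = x^p + x^{−p} − 2 = (1 − x^p)(x^{−p} − 1), and for all natural numbers n and k, σ_{n + k·p}(x, e_p) = σ_n(x, e_p) · ( (1 − x^p)(x^{−p} − 1) )^k. -/

import Mathlib

open Polynomial Finset

/-- Product of `y - ζ^i` over a full period of a primitive root. -/
lemma prod_sub_pow {p : ℕ} (hp : 1 ≤ p) {e : ℂ} (he : IsPrimitiveRoot e p) (y : ℂ) :
    ∏ i ∈ Finset.range p, (y - e ^ i) = y ^ p - 1 := by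
  have : NeZero p := ⟨by omega⟩
  have himg : Polynomial.nthRootsFinset p (1 : ℂ) = (Finset.range p).image (e ^ ·) := by
    ext ζ
    simp only [Polynomial.mem_nthRootsFinset (by omega : 0 < p) (1 : ℂ), Finset.mem_image,
      Finset.mem_range]
    constructor
    · intro hζ
      obtain ⟨i, hi, rfl⟩ := he.eq_pow_of_pow_eq_one hζ
      exact ⟨i, hi, rfl⟩
    · rintro ⟨i, _, rfl⟩
      rw [← pow_mul, mul_comm, pow_mul, he.pow_eq_one, one_pow]
  have hpoly := Polynomial.X_pow_sub_one_eq_prod (R := ℂ) (by omega) he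
  have h2 := congrArg (Polynomial.eval y) hpoly
  simp only [Polynomial.eval_sub, Polynomial.eval_pow, Polynomial.eval_X,
    Polynomial.eval_one, Polynomial.eval_prod, Polynomial.eval_C] at h2
  rw [himg, Finset.prod_image ?inj] at h2
  · exact h2.symm
  · intro i hi j hj hij
    exact he.injOn_pow (by simpa using hi) (by simpa using hj) hij

/-- `σ_m(x,ζ) = ∏_{i=1}^{m} (x + x⁻¹ − ζ^i − ζ^{−i})`. -/
noncomputable def sigma' (m : ℕ) (x ζ : ℂ) : ℂ :=
  ∏ i ∈ Finset.Icc 1 m, (x + x⁻¹ - ζ ^ i - (ζ ^ i)⁻¹)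

theorem stmt2 (p : ℕ) (hp : 1 ≤ p) (e : ℂ) (he : IsPrimitiveRoot e p)
    (x : ℂ) (hx : x ≠ 0) :
    sigma' p x e = x ^ p + (x ^ p)⁻¹ - 2 ∧
    x ^ p + (x ^ p)⁻¹ - 2 = (1 - x ^ p) * ((x ^ p)⁻¹ - 1) ∧
    ∀ n k : ℕ, sigma' (n + k * p) x e =
      sigma' n x e * ((1 - x ^ p) * ((x ^ p)⁻¹ - 1)) ^ k := by
  have he0 : e ≠ 0 := he.ne_zero (by omega)
  have hxp : x ^ p ≠ 0 := pow_ne_zero _ hx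
  -- factorization of each term
  have hterm : ∀ i : ℕ, x + x⁻¹ - e ^ i - (e ^ i)⁻¹
      = (x - e ^ i) * (x - (e⁻¹) ^ i) * x⁻¹ := by
    intro i
    have hei : e ^ i ≠ 0 := pow_ne_zero _ he0
    rw [inv_pow]
    field_simp
    ring
  have hIcc : ∀ (f : ℕ → ℂ), f p = f 0 →
      ∏ i ∈ Finset.Icc 1 p, f i = ∏ i ∈ Finset.range p, f i := by
    intro f hf
    have h1 : Finset.Icc 1 p = insert p (Finset.Ico 1 p) := by
      rw [Finset.Ico_insert_right hp]
    have h2 : Finset.range p = insert 0 (Finset.Ico 1 p) := by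
      ext a; simp [Finset.mem_Ico]; omega
    rw [h1, h2, Finset.prod_insert (by simp), Finset.prod_insert (by simp), hf]
  have hsp : sigma' p x e = (1 - x ^ p) * ((x ^ p)⁻¹ - 1) := by
    rw [sigma', hIcc _ (by rw [he.pow_eq_one, pow_zero])]
    calc ∏ i ∈ Finset.range p, (x + x⁻¹ - e ^ i - (e ^ i)⁻¹)
        = ∏ i ∈ Finset.range p, ((x - e ^ i) * (x - (e⁻¹) ^ i) * x⁻¹) :=
          Finset.prod_congr rfl fun i _ => hterm i
      _ = (∏ i ∈ Finset.range p, (x - e ^ i)) * (∏ i ∈ Finset.range p, (x - (e⁻¹) ^ i))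
            * ∏ _i ∈ Finset.range p, x⁻¹ := by
          rw [Finset.prod_mul_distrib, Finset.prod_mul_distrib]
      _ = (x ^ p - 1) * (x ^ p - 1) * x⁻¹ ^ p := by
          rw [prod_sub_pow hp he, prod_sub_pow hp he.inv, Finset.prod_const, Finset.card_range]
      _ = (1 - x ^ p) * ((x ^ p)⁻¹ - 1) := by
          rw [inv_pow]; field_simp; ring
  have halg : x ^ p + (x ^ p)⁻¹ - 2 = (1 - x ^ p) * ((x ^ p)⁻¹ - 1) := by
    field_simp
    ring
  refine ⟨hsp.trans halg.symm, halg, ?_⟩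
  -- periodicity: sigma' (m + p) = sigma' m * sigma' p
  have hstep : ∀ m : ℕ, sigma' (m + p) x e = sigma' m x e * sigma' p x e := by
    intro m
    have hsplit : Finset.Icc 1 (m + p) = Finset.Icc 1 p ∪ Finset.Icc (p + 1) (p + m) := by
      ext a; simp only [Finset.mem_Icc, Finset.mem_union]; omega
    rw [sigma', hsplit, Finset.prod_union (by
      apply Finset.disjoint_left.mpr
      intro a ha hb
      simp only [Finset.mem_Icc] at ha hb
      omega)]
    have hmap : Finset.Icc (p + 1) (p + m) = (Finset.Icc 1 m).map (addLeftEmbedding p) := by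
      rw [Finset.map_add_left_Icc]
    rw [hmap, Finset.prod_map]
    have : ∀ i : ℕ, x + x⁻¹ - e ^ (addLeftEmbedding p i) - (e ^ (addLeftEmbedding p i))⁻¹
        = x + x⁻¹ - e ^ i - (e ^ i)⁻¹ := by
      intro i
      have : e ^ (p + i) = e ^ i := by rw [pow_add, he.pow_eq_one, one_mul]
      simp [addLeftEmbedding, this]
    rw [Finset.prod_congr rfl fun i _ => this i]
    rw [mul_comm]
    rfl
  intro n k
  induction k with
  | zero => simp
  | succ k ih =>
    have : n + (k + 1) * p = (n + k * p) + p := by ring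
    rw [this, hstep, ih, hsp]
    ring
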